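/- Let K be a field, n > 1, and a ∈ K[s]^n a nonzero row vector. Suppose u_1,...,u_{n-1} are nonzero elements of syz(a) that generate syz(a) as a K[s]-module and whose leading vectors LV(u_1),...,LV(u_{n-1}) are linearly independent over K. Then for every h ∈ syz(a) there exist g_1,...,g_{n-1} ∈ K[s] with deg(g_i) ≤ deg(h) − deg(u_i) for each i (in particular g_i = 0 whenever deg(u_i) > deg(h)) such that h = Σ_{i=1}^{n-1} g_i u_i. -/

import Mathlib

open Polynomial
open scoped Classical

noncomputable section

/-- The degree of a polynomial vector: the maximum of the degrees of the entries. -/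
def vdeg {K : Type*} [Field K] {n : ℕ} (h : Fin n → K[X]) : ℕ :=
  Finset.univ.sup fun i => (h i).natDegree

/-- The leading vector of a polynomial vector: the vector of coefficients of
`s ^ (vdeg h)` in the entries. -/
def LV {K : Type*} [Field K] {n : ℕ} (h : Fin n → K[X]) : Fin n → K :=
  fun i => (h i).coeff (vdeg h)

/-- The syzygy module of a row vector `a` of polynomials. -/
def syz {K : Type*} [Field K] {n : ℕ} (a : Fin n → K[X]) :
    Submodule K[X] (Fin n → K[X]) where
  carrier := {h | ∑ i, a i * h i = 0}
  add_mem' := by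
    intro x y hx hy
    simp only [Set.mem_setOf_eq] at *
    simp only [Pi.add_apply, mul_add, Finset.sum_add_distrib, hx, hy, add_zero]
  zero_mem' := by simp
  smul_mem' := by
    intro c x hx
    simp only [Set.mem_setOf_eq] at *
    have h1 : ∑ i, a i * (c • x) i = c * ∑ i, a i * x i := by
      rw [Finset.mul_sum]
      refine Finset.sum_congr rfl fun i _ => ?_
      simp only [Pi.smul_apply, smul_eq_mul]
      ring
    rw [h1, hx, mul_zero]

/-- The coefficient matrix `A ∈ K^{(2d+1) × n(d+1)}` associated with a polynomial row
vector `a` of degree at most `d`:  `A_{k+1, i+jn} = c_{k-j,i}` where `c_m` is the vector of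
coefficients of `s^m` in `a` (with `c_m = 0` for `m < 0` or `m > d`). -/
def coefA {K : Type*} [Field K] {n : ℕ} (d : ℕ) (hn : 0 < n) (a : Fin n → K[X]) :
    Matrix (Fin (2*d+1)) (Fin (n*(d+1))) K :=
  Matrix.of fun k ℓ =>
    if (ℓ : ℕ) / n ≤ (k : ℕ) then
      (a ⟨(ℓ : ℕ) % n, Nat.mod_lt _ hn⟩).coeff ((k : ℕ) - (ℓ : ℕ) / n)
    else 0

/-- The `♭` isomorphism `K^{n(d+1)} → K[s]^n`: split `v` into `d+1` consecutive blocks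
`w_0, …, w_d ∈ K^n` and form `∑_j s^j w_j`. -/
def flatv {K : Type*} [Field K] {n : ℕ} (d : ℕ) (v : Fin (n*(d+1)) → K) : Fin n → K[X] :=
  fun i => ∑ j : Fin (d+1), C (v ⟨(i:ℕ) + (j:ℕ)*n, by
    calc (i:ℕ) + (j:ℕ)*n < n + (j:ℕ)*n := Nat.add_lt_add_right i.isLt _
      _ = n * ((j:ℕ)+1) := by ring
      _ ≤ n * (d+1) := Nat.mul_le_mul le_rfl j.isLt⟩) * X ^ (j:ℕ)

/-- The `♭` isomorphism `K^m → K[s]` for scalars. -/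
def flat1 {K : Type*} [Field K] {m : ℕ} (w : Fin m → K) : K[X] :=
  ∑ k : Fin m, C (w k) * X ^ (k:ℕ)

/-- A column index `j` of a matrix is pivotal if the `j`-th column is not a `K`-linear
combination of the columns of smaller index. -/
def Pivotal {K : Type*} [Field K] {m N : ℕ} (A : Matrix (Fin m) (Fin N) K) (j : Fin N) : Prop :=
  (fun k => A k j) ∉ Submodule.span K ((fun r : Fin N => fun k => A k r) '' {r | r < j})

/-- A basic non-pivotal index: the minimal non-pivotal index in its residue class modulo `n`. -/
def BasicNP {K : Type*} [Field K] {m N : ℕ} (n : ℕ) (A : Matrix (Fin m) (Fin N) K)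
    (r : Fin N) : Prop :=
  ¬ Pivotal A r ∧ ∀ r' : Fin N, ¬ Pivotal A r' → (r':ℕ) % n = (r:ℕ) % n → r ≤ r'

/-- `B` encodes, for each non-pivotal index `i`, the row-echelon null vector
`b_i = e_i − v_i`: `(b_i)_i = 1`, `(b_i)_j = −α_j` for pivotal `j < i` where
`A_{*i} = Σ α_j A_{*j}`, and all other entries vanish.  Equivalently, `b_i ∈ ker A`,
`(b_i)_i = 1` and `(b_i)_j = 0` unless `j = i` or `j` is pivotal with `j < i`. -/
def IsEchelonNull {K : Type*} [Field K] {m N : ℕ} (A : Matrix (Fin m) (Fin N) K)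
    (B : Fin N → Fin N → K) : Prop :=
  ∀ i : Fin N, ¬ Pivotal A i →
    A.mulVec (B i) = 0 ∧ B i i = 1 ∧
    ∀ j : Fin N, j ≠ i → ¬ (Pivotal A j ∧ j < i) → B i j = 0

/-- Shift an index by `t`, modulo the size (used only when `j + t` is in range). -/
def shiftIdx {N : ℕ} (j : Fin N) (t : ℕ) : Fin N :=
  ⟨((j:ℕ) + t) % N, Nat.mod_lt _ j.pos⟩
/-- Top-coefficient of a product: if `natDegree q ≤ d`, the coefficient of
`X ^ (natDegree p + d)` in `p * q` is `leadingCoeff p * coeff q d`. -/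
lemma coeff_mul_top {K : Type*} [Field K] (p q : K[X]) (d : ℕ) (hq : q.natDegree ≤ d) :
    (p * q).coeff (p.natDegree + d) = p.leadingCoeff * q.coeff d := by
  rw [Polynomial.coeff_mul]
  rw [Finset.sum_eq_single (p.natDegree, d)]
  · rfl
  · rintro ⟨x, y⟩ hxy hne
    simp only [Finset.HasAntidiagonal.mem_antidiagonal] at hxy
    rcases lt_trichotomy x p.natDegree with hx | hx | hx
    · have hy : q.natDegree < y := by omega
      simp [Polynomial.coeff_eq_zero_of_natDegree_lt hy]
    · exfalso; apply hne
      have : y = d := by omega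
      simp [hx, this]
    · simp [Polynomial.coeff_eq_zero_of_natDegree_lt hx]
  · intro hni; simp at hni

/-- reduced representation.  If `u_1, …, u_{n-1}` are nonzero syzygies
that generate `syz a` and whose leading vectors are `K`-linearly independent, then every
`h ∈ syz a` can be written `h = Σ g_i u_i` with `deg g_i ≤ deg h − deg u_i`
(in particular `g_i = 0` whenever `deg u_i > deg h`). -/
theorem mu_basis_reduced_representation {K : Type*} [Field K] {n : ℕ} (hn : 1 < n)
    (a : Fin n → K[X]) (ha : a ≠ 0)
    (u : Fin (n-1) → Fin n → K[X]) (hu0 : ∀ i, u i ≠ 0)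
    (humem : ∀ i, u i ∈ syz a)
    (huspan : Submodule.span K[X] (Set.range u) = syz a)
    (hLV : LinearIndependent K fun i => LV (u i)) :
    ∀ h ∈ syz a, ∃ g : Fin (n-1) → K[X],
      (∀ i, g i = 0 ∨ (g i).natDegree + vdeg (u i) ≤ vdeg h) ∧
      h = ∑ i, g i • u i := by
  intro h hh
  rw [← huspan, Submodule.mem_span_range_iff_exists_fun] at hh
  obtain ⟨g, hg⟩ := hh
  refine ⟨g, ?_, hg.symm⟩
  by_contra hcon
  push_neg at hcon
  obtain ⟨i0, hi0ne, hi0deg⟩ := hcon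
  classical
  set T := Finset.univ.filter (fun i => g i ≠ 0) with hT
  set D := T.sup (fun i => (g i).natDegree + vdeg (u i)) with hD
  have hi0T : i0 ∈ T := by simp [hT, hi0ne]
  have hDgt : vdeg h < D := by
    rw [hD]; exact lt_of_lt_of_le hi0deg (Finset.le_sup (f := fun i => (g i).natDegree + vdeg (u i)) hi0T)
  obtain ⟨im, himT, himD⟩ := Finset.exists_mem_eq_sup T ⟨i0, hi0T⟩
    (fun i => (g i).natDegree + vdeg (u i))
  set S := Finset.univ.filter
    (fun i => g i ≠ 0 ∧ (g i).natDegree + vdeg (u i) = D) with hS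
  have himS : im ∈ S := by
    simp only [hS, Finset.mem_filter, Finset.mem_univ, true_and]
    exact ⟨(Finset.mem_filter.mp himT).2, by rw [hD]; exact himD.symm⟩
  have key : ∀ j, ∑ i ∈ S, (g i).leadingCoeff * ((u i) j).coeff (vdeg (u i)) = 0 := by
    intro j
    have h1 : (h j).natDegree ≤ vdeg h := Finset.le_sup (f := fun i => (h i).natDegree) (Finset.mem_univ j)
    have h2 : (h j).coeff D = 0 :=
      Polynomial.coeff_eq_zero_of_natDegree_lt (lt_of_le_of_lt h1 hDgt)
    have h3 : h j = ∑ i, g i * (u i) j := by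
      rw [← hg]; simp [Finset.sum_apply]
    rw [h3, Polynomial.finset_sum_coeff] at h2
    have h4 : ∑ i, (g i * (u i) j).coeff D = ∑ i ∈ S, (g i * (u i) j).coeff D := by
      symm
      apply Finset.sum_subset (Finset.subset_univ S)
      intro i _ hiS
      simp only [hS, Finset.mem_filter, Finset.mem_univ, true_and, not_and] at hiS
      by_cases hgi : g i = 0
      · simp [hgi]
      · have hiT : i ∈ T := by
          rw [hT]; exact Finset.mem_filter.mpr ⟨Finset.mem_univ i, hgi⟩
        have hle : (g i).natDegree + vdeg (u i) ≤ D := by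
          rw [hD]
          exact Finset.le_sup (f := fun i => (g i).natDegree + vdeg (u i)) hiT
        have hlt : (g i).natDegree + vdeg (u i) < D :=
          lt_of_le_of_ne hle (hiS hgi)
        have hdm : (g i * (u i) j).natDegree < D := by
          refine lt_of_le_of_lt (le_trans (Polynomial.natDegree_mul_le) ?_) hlt
          exact Nat.add_le_add_left (Finset.le_sup (f := fun k => ((u i) k).natDegree) (Finset.mem_univ j)) _
        exact Polynomial.coeff_eq_zero_of_natDegree_lt hdm
    have h5 : ∑ i ∈ S, (g i * (u i) j).coeff D
        = ∑ i ∈ S, (g i).leadingCoeff * ((u i) j).coeff (vdeg (u i)) := by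
      apply Finset.sum_congr rfl
      intro i hiS
      simp only [hS, Finset.mem_filter, Finset.mem_univ, true_and] at hiS
      rw [← hiS.2]
      exact coeff_mul_top _ _ _ (Finset.le_sup (f := fun k => ((u i) k).natDegree) (Finset.mem_univ j))
    rw [h4, h5] at h2
    exact h2
  set c : Fin (n-1) → K := fun i => if i ∈ S then (g i).leadingCoeff else 0 with hc
  have hsum : ∑ i, c i • LV (u i) = 0 := by
    funext j
    have hk := key j
    simp only [Finset.sum_apply, Pi.smul_apply, Pi.zero_apply, smul_eq_mul, hc, LV,
      ite_mul, zero_mul]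
    rw [Finset.sum_ite_mem, Finset.univ_inter]
    exact hk
  have hzero := Fintype.linearIndependent_iff.mp hLV c hsum im
  rw [hc] at hzero
  simp only [himS, if_true] at hzero
  exact (Finset.mem_filter.mp himS).2.1 (Polynomial.leadingCoeff_eq_zero.mp hzero)
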